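/- Let α, β be real with α < β < −α, let ρ(s) = (1+s)^{−(α−β)/2−1}(1−s)^{−(α+β)/2−1} for s ∈ (−1,1), for l ∈ ℕ define Ψ_l(s) = (1/ρ(s)) · (d/ds)^l [(1−s²)^l ρ(s)], and for m ≤ l define the associated special functions Ψ_{l,m}(s) = (1−s²)^{m/2} · (d/ds)^m Ψ_l(s). Then for every m ∈ ℕ and all natural numbers l ≠ l' with m ≤ l and m ≤ l', the function s ↦ Ψ_{l,m}(s) Ψ_{l',m}(s) ρ(s) is integrable on (−1,1) and ∫_{−1}^{1} Ψ_{l,m}(s) Ψ_{l',m}(s) ρ(s) ds = 0. -/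

import Mathlib

open MeasureTheory Polynomial Set

noncomputable def jacT (a b : ℝ) (q : ℝ[X]) : ℝ[X] :=
  C a * ((1 - X) * q) - C b * ((1 + X) * q) + (1 - X ^ 2) * derivative q

noncomputable def jacF (a b : ℝ) (q : ℝ[X]) : ℝ → ℝ :=
  fun s => (1 + s) ^ a * (1 - s) ^ b * q.eval s

lemma jacF_hasDerivAt (a b : ℝ) (q : ℝ[X]) {s : ℝ} (h1 : 0 < 1 + s) (h2 : 0 < 1 - s) :
    HasDerivAt (jacF a b q) (jacF (a - 1) (b - 1) (jacT a b q) s) s := by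
  have hp : HasDerivAt (fun t : ℝ => (1 + t) ^ a) (a * (1 + s) ^ (a - 1)) s := by
    have h := (Real.hasDerivAt_rpow_const (x := 1 + s) (p := a) (Or.inl h1.ne')).comp s
      ((hasDerivAt_id s).const_add 1)
    simpa [Function.comp_def] using h
  have hq : HasDerivAt (fun t : ℝ => (1 - t) ^ b) (-(b * (1 - s) ^ (b - 1))) s := by
    have h := (Real.hasDerivAt_rpow_const (x := 1 - s) (p := b) (Or.inl h2.ne')).comp s
      ((hasDerivAt_id s).neg.const_add 1)
    simpa [mul_comm, Function.comp_def] using h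
  have hpol : HasDerivAt (fun t : ℝ => q.eval t) (q.derivative.eval s) s := q.hasDerivAt s
  have h : HasDerivAt (jacF a b q) _ s := (hp.mul hq).mul hpol
  convert h using 1
  have e1 : (1 + s) ^ a = (1 + s) ^ (a - 1) * (1 + s) := by
    rw [← Real.rpow_add_one h1.ne']; ring_nf
  have e2 : (1 - s) ^ b = (1 - s) ^ (b - 1) * (1 - s) := by
    rw [← Real.rpow_add_one h2.ne']; ring_nf
  simp only [jacF, jacT, eval_add, eval_sub, eval_mul, eval_one, eval_C, eval_X, eval_pow, Pi.mul_apply]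
  rw [e1, e2]
  ring

noncomputable def jacChain : ℕ → ℝ → ℝ → ℝ[X] → ℝ[X]
  | 0, _, _, q => q
  | (k + 1), a, b, q => jacChain k (a - 1) (b - 1) (jacT a b q)

lemma natDegree_jacT_le (a b : ℝ) (q : ℝ[X]) : (jacT a b q).natDegree ≤ q.natDegree + 1 := by
  unfold jacT
  refine (natDegree_add_le _ _).trans (max_le ((natDegree_sub_le _ _).trans (max_le ?_ ?_)) ?_)
  · refine (natDegree_mul_le).trans ?_
    have : ((1 - X : ℝ[X]) * q).natDegree ≤ 1 + q.natDegree := by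
      refine natDegree_mul_le.trans (add_le_add ?_ le_rfl)
      exact (natDegree_sub_le _ _).trans (by simp)
    simpa [natDegree_C, add_comm] using this
  · refine (natDegree_mul_le).trans ?_
    have : ((1 + X : ℝ[X]) * q).natDegree ≤ 1 + q.natDegree := by
      refine natDegree_mul_le.trans (add_le_add ?_ le_rfl)
      exact (natDegree_add_le _ _).trans (by simp)
    simpa [natDegree_C, add_comm] using this
  · have h1 : (1 - X ^ 2 : ℝ[X]).natDegree ≤ 2 := (natDegree_sub_le _ _).trans (by simp)
    rcases Nat.eq_zero_or_pos q.natDegree with h0 | h0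
    · have : derivative q = 0 := by
        rcases Polynomial.natDegree_eq_zero.mp h0 with ⟨c, rfl⟩
        simp
      simp [this]
    · refine natDegree_mul_le.trans ?_
      have h2 : (derivative q).natDegree ≤ q.natDegree - 1 := natDegree_derivative_le q
      omega

lemma natDegree_jacChain_le (k : ℕ) : ∀ (a b : ℝ) (q : ℝ[X]),
    (jacChain k a b q).natDegree ≤ q.natDegree + k := by
  induction k with
  | zero => intro a b q; simp [jacChain]
  | succ k ih =>
    intro a b q
    calc (jacChain (k+1) a b q).natDegree = (jacChain k (a-1) (b-1) (jacT a b q)).natDegree := rfl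
      _ ≤ (jacT a b q).natDegree + k := ih _ _ _
      _ ≤ q.natDegree + (k + 1) := by have := natDegree_jacT_le a b q; omega

lemma iteratedDeriv_congr_Ioo' (k : ℕ) : ∀ {f g : ℝ → ℝ}, (∀ x ∈ Ioo (-1 : ℝ) 1, f x = g x) →
    ∀ {s : ℝ}, s ∈ Ioo (-1 : ℝ) 1 → iteratedDeriv k f s = iteratedDeriv k g s := by
  induction k with
  | zero => intro f g h s hs; simpa using h s hs
  | succ k ih =>
    intro f g h s hs
    rw [iteratedDeriv_succ', iteratedDeriv_succ']
    refine ih (fun x hx => ?_) hs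
    exact (Filter.eventuallyEq_of_mem (isOpen_Ioo.mem_nhds hx) h).deriv_eq

lemma iteratedDeriv_congr_Ioo {f g : ℝ → ℝ} (h : ∀ x ∈ Ioo (-1 : ℝ) 1, f x = g x)
    (k : ℕ) {s : ℝ} (hs : s ∈ Ioo (-1 : ℝ) 1) : iteratedDeriv k f s = iteratedDeriv k g s :=
  iteratedDeriv_congr_Ioo' k h hs

lemma iteratedDeriv_jacF (k : ℕ) : ∀ (a b : ℝ) (q : ℝ[X]) {s : ℝ}, s ∈ Ioo (-1 : ℝ) 1 →
    iteratedDeriv k (jacF a b q) s = jacF (a - k) (b - k) (jacChain k a b q) s := by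
  induction k with
  | zero => intro a b q s _; simp [jacChain]
  | succ k ih =>
    intro a b q s hs
    rw [iteratedDeriv_succ']
    have hder : ∀ x ∈ Ioo (-1 : ℝ) 1,
        deriv (jacF a b q) x = jacF (a - 1) (b - 1) (jacT a b q) x := by
      intro x hx
      exact (jacF_hasDerivAt a b q (by linarith [hx.1]) (by linarith [hx.2])).deriv
    rw [iteratedDeriv_congr_Ioo hder k hs, ih (a - 1) (b - 1) (jacT a b q) hs]
    have : a - 1 - k = a - (k + 1 : ℕ) := by push_cast; ring
    have hb : b - 1 - k = b - (k + 1 : ℕ) := by push_cast; ring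
    rw [this, hb]
    rfl

lemma intervalIntegrable_jacF (a b : ℝ) (ha : -1 < a) (hb : -1 < b) (q : ℝ[X]) :
    IntervalIntegrable (jacF a b q) volume (-1) 1 := by
  have hpoly : Continuous fun s : ℝ => q.eval s := q.continuous_aeval
  refine IntervalIntegrable.trans (b := 0) ?_ ?_
  · have h1 : IntervalIntegrable (fun s : ℝ => (1 + s) ^ a) volume (-1) 0 := by
      have := (intervalIntegral.intervalIntegrable_rpow' (a := 0) (b := 1) ha).comp_add_right 1
      norm_num at this
      simpa [add_comm] using this
    have hcont : ContinuousOn (fun s : ℝ => (1 - s) ^ b * q.eval s) (Set.uIcc (-1 : ℝ) 0) := by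
      refine ContinuousOn.mul ?_ hpoly.continuousOn
      refine ContinuousOn.rpow_const ((continuous_const.sub continuous_id).continuousOn) ?_
      intro x hx
      rw [uIcc_of_le (by norm_num : (-1:ℝ) ≤ 0)] at hx
      exact Or.inl (by nlinarith [hx.2])
    have h2 := h1.mul_continuousOn hcont
    have hfun : (fun x : ℝ => (1 + x) ^ a * ((1 - x) ^ b * q.eval x)) = jacF a b q := by
      funext x; unfold jacF; ring
    exact hfun ▸ h2
  · have h1 : IntervalIntegrable (fun s : ℝ => (1 - s) ^ b) volume 0 1 := by
      have := (intervalIntegral.intervalIntegrable_rpow' (a := 0) (b := 1) hb).comp_sub_left 1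
      norm_num at this
      exact this.symm
    have hcont : ContinuousOn (fun s : ℝ => (1 + s) ^ a * q.eval s) (Set.uIcc (0 : ℝ) 1) := by
      refine ContinuousOn.mul ?_ hpoly.continuousOn
      refine ContinuousOn.rpow_const ((continuous_const.add continuous_id).continuousOn) ?_
      intro x hx
      rw [uIcc_of_le (by norm_num : (0:ℝ) ≤ 1)] at hx
      exact Or.inl (by nlinarith [hx.1])
    have h2 := h1.mul_continuousOn hcont
    have hfun : (fun x : ℝ => (1 - x) ^ b * ((1 + x) ^ a * q.eval x)) = jacF a b q := by
      funext x; unfold jacF; ring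
    exact hfun ▸ h2

lemma integrableOn_jacF (a b : ℝ) (ha : -1 < a) (hb : -1 < b) (q : ℝ[X]) :
    IntegrableOn (jacF a b q) (Ioo (-1 : ℝ) 1) := by
  have := (intervalIntegrable_jacF a b ha hb q).1
  exact this.mono_set Ioo_subset_Ioc_self

lemma continuousOn_jacF (a b : ℝ) (ha : 0 < a) (hb : 0 < b) (q : ℝ[X]) :
    ContinuousOn (jacF a b q) (Icc (-1 : ℝ) 1) := by
  have h1 : Continuous fun x : ℝ => x ^ a := by
    rw [continuous_iff_continuousAt]
    exact fun x => Real.continuousAt_rpow_const x a (Or.inr ha.le)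
  have h2 : Continuous fun x : ℝ => x ^ b := by
    rw [continuous_iff_continuousAt]
    exact fun x => Real.continuousAt_rpow_const x b (Or.inr hb.le)
  exact (((h1.comp (continuous_const.add continuous_id)).mul
    (h2.comp (continuous_const.sub continuous_id))).mul q.continuous_aeval).continuousOn

lemma setIntegral_Ioo_eq_intervalIntegral (f : ℝ → ℝ) :
    ∫ s in Ioo (-1 : ℝ) 1, f s = ∫ s in (-1 : ℝ)..1, f s := by
  rw [intervalIntegral.integral_of_le (by norm_num : (-1:ℝ) ≤ 1),
    ← MeasureTheory.integral_Ioc_eq_integral_Ioo]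

lemma integral_jacT (a b : ℝ) (ha : 0 < a) (hb : 0 < b) (r : ℝ[X]) :
    ∫ s in Ioo (-1 : ℝ) 1, jacF (a - 1) (b - 1) (jacT a b r) s = 0 := by
  have hint : IntervalIntegrable (jacF (a-1) (b-1) (jacT a b r)) volume (-1) 1 :=
    intervalIntegrable_jacF _ _ (by linarith) (by linarith) _
  have hftc := intervalIntegral.integral_eq_sub_of_hasDerivAt_of_le
    (by norm_num : (-1:ℝ) ≤ 1) (continuousOn_jacF a b ha hb r)
    (fun x hx => jacF_hasDerivAt a b r (by linarith [hx.1]) (by linarith [hx.2])) hint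
  have e1 : jacF a b r 1 = 0 := by
    simp [jacF, Real.zero_rpow hb.ne']
  have e2 : jacF a b r (-1) = 0 := by
    have : (1 : ℝ) + (-1) = 0 := by norm_num
    simp [jacF, this, Real.zero_rpow ha.ne']
  rw [setIntegral_Ioo_eq_intervalIntegral, hftc, e1, e2, sub_zero]

lemma jacT_mul (a b : ℝ) (q p : ℝ[X]) :
    jacT a b (q * p) = jacT a b q * p + (1 - X ^ 2) * (q * derivative p) := by
  unfold jacT
  rw [derivative_mul]
  ring

lemma jacF_shift (a b : ℝ) (r : ℝ[X]) {s : ℝ} (hs : s ∈ Ioo (-1 : ℝ) 1) :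
    jacF (a - 1) (b - 1) ((1 - X ^ 2) * r) s = jacF a b r s := by
  have h1 : (0:ℝ) < 1 + s := by linarith [hs.1]
  have h2 : (0:ℝ) < 1 - s := by linarith [hs.2]
  have e1 : (1 + s) ^ a = (1 + s) ^ (a - 1) * (1 + s) := by
    rw [← Real.rpow_add_one h1.ne']; ring_nf
  have e2 : (1 - s) ^ b = (1 - s) ^ (b - 1) * (1 - s) := by
    rw [← Real.rpow_add_one h2.ne']; ring_nf
  simp only [jacF, eval_mul, eval_sub, eval_one, eval_pow, eval_X]
  rw [e1, e2]; ring

lemma jacIBP (a b : ℝ) (ha : 0 < a) (hb : 0 < b) (q p : ℝ[X]) :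
    ∫ s in Ioo (-1 : ℝ) 1, jacF (a - 1) (b - 1) (jacT a b q * p) s
      = - ∫ s in Ioo (-1 : ℝ) 1, jacF a b (q * derivative p) s := by
  have hzero := integral_jacT a b ha hb (q * p)
  have hsplit : ∀ s ∈ Ioo (-1 : ℝ) 1, jacF (a - 1) (b - 1) (jacT a b (q * p)) s
      = jacF (a - 1) (b - 1) (jacT a b q * p) s + jacF a b (q * derivative p) s := by
    intro s hs
    rw [jacT_mul]
    have : jacF (a-1) (b-1) (jacT a b q * p + (1 - X ^ 2) * (q * derivative p)) s
        = jacF (a-1) (b-1) (jacT a b q * p) s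
          + jacF (a-1) (b-1) ((1 - X ^ 2) * (q * derivative p)) s := by
      simp [jacF, eval_add]; ring
    rw [this, jacF_shift a b _ hs]
  have hint1 : IntegrableOn (jacF (a-1) (b-1) (jacT a b q * p)) (Ioo (-1:ℝ) 1) :=
    integrableOn_jacF _ _ (by linarith) (by linarith) _
  have hint2 : IntegrableOn (jacF a b (q * derivative p)) (Ioo (-1:ℝ) 1) :=
    integrableOn_jacF _ _ (by linarith) (by linarith) _
  have := MeasureTheory.setIntegral_congr_fun (μ := volume) (measurableSet_Ioo) hsplit
  rw [this, MeasureTheory.integral_add hint1 hint2] at hzero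
  linarith

lemma jacChain_integral (k : ℕ) : ∀ (a b : ℝ), (k : ℝ) - 1 < a → (k : ℝ) - 1 < b →
    ∀ (q p : ℝ[X]),
    ∫ s in Ioo (-1 : ℝ) 1, jacF (a - k) (b - k) (jacChain k a b q * p) s
      = (-1 : ℝ) ^ k * ∫ s in Ioo (-1 : ℝ) 1, jacF a b (q * (derivative^[k] p)) s := by
  induction k with
  | zero => intro a b _ _ q p; simp [jacChain]
  | succ k ih =>
    intro a b ha hb q p
    have hk : (k : ℝ) < a := by push_cast at ha; linarith
    have hk' : (k : ℝ) < b := by push_cast at hb; linarith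
    have ha0 : 0 < a := lt_of_le_of_lt (Nat.cast_nonneg k) hk
    have hb0 : 0 < b := lt_of_le_of_lt (Nat.cast_nonneg k) hk'
    have e1 : a - ((k : ℕ) + 1 : ℕ) = (a - 1) - k := by push_cast; ring
    have e2 : b - ((k : ℕ) + 1 : ℕ) = (b - 1) - k := by push_cast; ring
    have hstep := ih (a - 1) (b - 1) (by linarith) (by linarith) (jacT a b q) p
    calc ∫ s in Ioo (-1 : ℝ) 1, jacF (a - (k+1 : ℕ)) (b - (k+1 : ℕ))
          (jacChain (k+1) a b q * p) s
        = ∫ s in Ioo (-1 : ℝ) 1, jacF ((a-1) - k) ((b-1) - k)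
          (jacChain k (a-1) (b-1) (jacT a b q) * p) s := by rw [e1, e2]; rfl
      _ = (-1:ℝ)^k * ∫ s in Ioo (-1 : ℝ) 1, jacF (a-1) (b-1)
          (jacT a b q * (derivative^[k] p)) s := hstep
      _ = (-1:ℝ)^k * (- ∫ s in Ioo (-1 : ℝ) 1, jacF a b
          (q * derivative (derivative^[k] p)) s) := by
          rw [jacIBP a b ha0 hb0 q (derivative^[k] p)]
      _ = (-1:ℝ)^(k+1) * ∫ s in Ioo (-1 : ℝ) 1, jacF a b (q * (derivative^[k+1] p)) s := by
          rw [← Function.iterate_succ_apply' derivative]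
          ring

lemma jacOrtho (A B : ℝ) (hA : -1 < A) (hB : -1 < B) (n : ℕ) (p : ℝ[X])
    (hdeg : p.natDegree < n) :
    ∫ s in Ioo (-1 : ℝ) 1, jacF A B (jacChain n ((n : ℝ) + A) ((n : ℝ) + B) 1 * p) s = 0 := by
  have h := jacChain_integral n ((n : ℝ) + A) ((n : ℝ) + B) (by linarith) (by linarith) 1 p
  have e1 : (n : ℝ) + A - n = A := by ring
  have e2 : (n : ℝ) + B - n = B := by ring
  rw [e1, e2] at h
  rw [h, Polynomial.iterate_derivative_eq_zero hdeg]
  simp [jacF]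

lemma iteratedDeriv_polyeval (k : ℕ) (p : ℝ[X]) :
    iteratedDeriv k (fun x : ℝ => p.eval x) = fun x => (derivative^[k] p).eval x := by
  induction k generalizing p with
  | zero => simp
  | succ k ih =>
    rw [iteratedDeriv_succ']
    have : deriv (fun x : ℝ => p.eval x) = fun x => (derivative p).eval x := by
      funext x; exact Polynomial.deriv p
    rw [this, ih, Function.iterate_succ_apply]

theorem orthogonality_associated_functions_jacobi
    (α β : ℝ) (hαβ : α < β) (hβα : β < -α)
    (ρ : ℝ → ℝ)
    (hρ : ∀ s : ℝ, s ∈ Set.Ioo (-1 : ℝ) 1 →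
      ρ s = (1 + s) ^ (-(α - β) / 2 - 1) * (1 - s) ^ (-(α + β) / 2 - 1))
    (Ψ : ℕ → ℝ → ℝ)
    (hΨ : ∀ (l : ℕ) (s : ℝ), s ∈ Set.Ioo (-1 : ℝ) 1 →
      Ψ l s = (1 / ρ s) * iteratedDeriv l (fun t => (1 - t ^ 2) ^ l * ρ t) s)
    (Ψa : ℕ → ℕ → ℝ → ℝ)
    (hΨa : ∀ (l m : ℕ) (s : ℝ), s ∈ Set.Ioo (-1 : ℝ) 1 →
      Ψa l m s = (1 - s ^ 2) ^ ((m : ℝ) / 2) * iteratedDeriv m (Ψ l) s)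
    (m l l' : ℕ) (hne : l ≠ l') (hml : m ≤ l) (hml' : m ≤ l') :
    IntegrableOn (fun s => Ψa l m s * Ψa l' m s * ρ s) (Set.Ioo (-1 : ℝ) 1) ∧
      ∫ s in Set.Ioo (-1 : ℝ) 1, Ψa l m s * Ψa l' m s * ρ s = 0 := by
  set A : ℝ := -(α - β) / 2 - 1 with hAdef
  set B : ℝ := -(α + β) / 2 - 1 with hBdef
  have hA : -1 < A := by rw [hAdef]; linarith
  have hB : -1 < B := by rw [hBdef]; linarith
  -- the Rodrigues polynomials
  set P : ℕ → ℝ[X] := fun n => jacChain n ((n : ℝ) + A) ((n : ℝ) + B) 1 with hPdef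
  have hdegP : ∀ n, (P n).natDegree ≤ n := by
    intro n
    have := natDegree_jacChain_le n ((n : ℝ) + A) ((n : ℝ) + B) 1
    simpa using this
  -- ρ in jacF form
  have hρF : ∀ s ∈ Ioo (-1 : ℝ) 1, ρ s = (1 + s) ^ A * (1 - s) ^ B := hρ
  have hρpos : ∀ s ∈ Ioo (-1 : ℝ) 1, 0 < ρ s := by
    intro s hs
    rw [hρF s hs]
    exact mul_pos (Real.rpow_pos_of_pos (by linarith [hs.1]) _)
      (Real.rpow_pos_of_pos (by linarith [hs.2]) _)
  -- the inner function equals jacF (l+A) (l+B) 1 on Ioo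
  have hinner : ∀ (n : ℕ) (t : ℝ), t ∈ Ioo (-1 : ℝ) 1 →
      (1 - t ^ 2) ^ n * ρ t = jacF ((n : ℝ) + A) ((n : ℝ) + B) 1 t := by
    intro n t ht
    have h1 : (0:ℝ) < 1 + t := by linarith [ht.1]
    have h2 : (0:ℝ) < 1 - t := by linarith [ht.2]
    have e : (1 - t ^ 2 : ℝ) = (1 + t) * (1 - t) := by ring
    rw [hρF t ht, e, mul_pow, ← Real.rpow_natCast (1 + t) n, ← Real.rpow_natCast (1 - t) n]
    unfold jacF
    rw [Real.rpow_add h1, Real.rpow_add h2]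
    simp
    ring
  -- Ψ n = eval (P n) on Ioo
  have hΨP : ∀ (n : ℕ) (s : ℝ), s ∈ Ioo (-1 : ℝ) 1 → Ψ n s = (P n).eval s := by
    intro n s hs
    rw [hΨ n s hs]
    have hiter : iteratedDeriv n (fun t => (1 - t ^ 2) ^ n * ρ t) s
        = jacF A B (P n) s := by
      rw [iteratedDeriv_congr_Ioo (hinner n) n hs,
        iteratedDeriv_jacF n ((n : ℝ) + A) ((n : ℝ) + B) 1 hs]
      have e1 : (n : ℝ) + A - n = A := by ring
      have e2 : (n : ℝ) + B - n = B := by ring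
      rw [e1, e2]
    rw [hiter]
    have : jacF A B (P n) s = ρ s * (P n).eval s := by
      unfold jacF; rw [hρF s hs]
    rw [this]
    field_simp [(hρpos s hs).ne']
  -- iterated derivatives of Ψ
  have hΨder : ∀ (n k : ℕ) (s : ℝ), s ∈ Ioo (-1 : ℝ) 1 →
      iteratedDeriv k (Ψ n) s = (derivative^[k] (P n)).eval s := by
    intro n k s hs
    rw [iteratedDeriv_congr_Ioo (hΨP n) k hs, iteratedDeriv_polyeval]
  set u : ℝ[X] := derivative^[m] (P l) with hudef
  set v : ℝ[X] := derivative^[m] (P l') with hvdef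
  -- the integrand in jacF form
  have hint : ∀ s ∈ Ioo (-1 : ℝ) 1,
      Ψa l m s * Ψa l' m s * ρ s = jacF (A + m) (B + m) (u * v) s := by
    intro s hs
    have h1 : (0:ℝ) < 1 + s := by linarith [hs.1]
    have h2 : (0:ℝ) < 1 - s := by linarith [hs.2]
    have h3 : (0:ℝ) < 1 - s ^ 2 := by nlinarith
    rw [hΨa l m s hs, hΨa l' m s hs, hΨder l m s hs, hΨder l' m s hs, hρF s hs]
    have e : (1 - s ^ 2 : ℝ) ^ ((m : ℝ) / 2) * (1 - s ^ 2) ^ ((m : ℝ) / 2)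
        = (1 + s) ^ (m : ℝ) * (1 - s) ^ (m : ℝ) := by
      rw [← Real.rpow_add h3]
      have : (m : ℝ) / 2 + (m : ℝ) / 2 = (m : ℝ) := by ring
      rw [this]
      have e2 : (1 - s ^ 2 : ℝ) = (1 + s) * (1 - s) := by ring
      rw [e2, Real.mul_rpow h1.le h2.le]
    unfold jacF
    rw [Real.rpow_add h1 A m, Real.rpow_add h2 B m]
    simp only [eval_mul]
    calc (1 - s ^ 2) ^ ((m:ℝ) / 2) * eval s u * ((1 - s ^ 2) ^ ((m:ℝ) / 2) * eval s v)
          * ((1 + s) ^ A * (1 - s) ^ B)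
        = ((1 - s ^ 2) ^ ((m:ℝ) / 2) * (1 - s ^ 2) ^ ((m:ℝ) / 2))
          * eval s u * eval s v * ((1 + s) ^ A * (1 - s) ^ B) := by ring
      _ = (1 + s) ^ A * (1 + s) ^ (m:ℝ) * ((1 - s) ^ B * (1 - s) ^ (m:ℝ))
          * (eval s u * eval s v) := by rw [e]; ring
  have hAm : (-1 : ℝ) < A + m := by
    have : (0:ℝ) ≤ (m:ℝ) := Nat.cast_nonneg m
    linarith
  have hBm : (-1 : ℝ) < B + m := by
    have : (0:ℝ) ≤ (m:ℝ) := Nat.cast_nonneg m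
    linarith
  constructor
  · exact (integrableOn_jacF (A + m) (B + m) hAm hBm (u * v)).congr_fun
      (fun s hs => (hint s hs).symm) measurableSet_Ioo
  · rw [MeasureTheory.setIntegral_congr_fun (μ := volume) measurableSet_Ioo hint]
    -- key: the integral vanishes whenever the polynomial degrees work out
    have key : ∀ (n n' : ℕ), m ≤ n → n < n' →
        ∫ s in Ioo (-1 : ℝ) 1, jacF (A + m) (B + m)
          ((derivative^[m] (P n)) * (derivative^[m] (P n'))) s = 0 := by
      intro n n' hmn hnn'
      set w : ℝ[X] := derivative^[m] (P n) with hwdef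
      have hchain := jacChain_integral m (A + (m : ℝ)) (B + (m : ℝ))
        (by linarith) (by linarith) w (P n')
      have e1 : A + (m : ℝ) - m = A := by ring
      have e2 : B + (m : ℝ) - m = B := by ring
      rw [e1, e2] at hchain
      set r : ℝ[X] := jacChain m (A + (m : ℝ)) (B + (m : ℝ)) w with hrdef
      have hdegr : r.natDegree < n' := by
        have h1 : r.natDegree ≤ w.natDegree + m := natDegree_jacChain_le m _ _ w
        have h2 : w.natDegree ≤ (P n).natDegree - m := natDegree_iterate_derivative _ _
        have h3 : (P n).natDegree ≤ n := hdegP n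
        omega
      have hortho := jacOrtho A B hA hB n' r hdegr
      have hmul : jacChain n' ((n' : ℝ) + A) ((n' : ℝ) + B) 1 * r = r * P n' := by
        rw [hPdef]; ring
      rw [hmul] at hortho
      rw [hortho] at hchain
      have hsq : ((-1 : ℝ) ^ m) * ((-1 : ℝ) ^ m) = 1 := by
        rw [← pow_add, Even.neg_one_pow ⟨m, rfl⟩]
      calc ∫ s in Ioo (-1 : ℝ) 1, jacF (A + m) (B + m) (w * derivative^[m] (P n')) s
          = ((-1:ℝ)^m * (-1:ℝ)^m) * ∫ s in Ioo (-1 : ℝ) 1,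
            jacF (A + m) (B + m) (w * derivative^[m] (P n')) s := by rw [hsq]; ring
        _ = (-1:ℝ)^m * ((-1:ℝ)^m * ∫ s in Ioo (-1 : ℝ) 1,
            jacF (A + m) (B + m) (w * derivative^[m] (P n')) s) := by ring
        _ = (-1:ℝ)^m * 0 := by rw [← hchain]
        _ = 0 := by ring
    rcases lt_or_gt_of_ne hne with h | h
    · exact key l l' hml h
    · have := key l' l hml' h
      rwa [mul_comm u v]
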